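/- Every inner product category is a unitary category, where the unitary structure map is φ_A := ⟨1_A|1_A⟩ : A → A†. In particular, φ_A is an isomorphism with inverse ⟨1_A|1_A⟩^ι, and satisfies [U.1] φ_{A†} = (φ_A^{-1})† and [U.2] φ_A ⋅ φ_{A†} = ι_A. -/
import Mathlib


open CategoryTheory

universe v u

/-- An (achiral) involutive category: a contravariant endofunctor `(−)†`
together with a natural isomorphism `ι : X → X††` satisfying `ι_{X†} ≫ (ι_X)† = 1`. -/
structure Involutive (C : Type u) [Category.{v} C] where
  dob : C → C
  dmap : ∀ {X Y : C}, (X ⟶ Y) → (dob Y ⟶ dob X)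
  dmap_id : ∀ X : C, dmap (𝟙 X) = 𝟙 (dob X)
  dmap_comp : ∀ {X Y Z : C} (f : X ⟶ Y) (g : Y ⟶ Z), dmap (f ≫ g) = dmap g ≫ dmap f
  ι : ∀ X : C, X ⟶ dob (dob X)
  ιinv : ∀ X : C, dob (dob X) ⟶ X
  ι_hom_inv : ∀ X : C, ι X ≫ ιinv X = 𝟙 X
  ι_inv_hom : ∀ X : C, ιinv X ≫ ι X = 𝟙 (dob (dob X))
  ι_natural : ∀ {X Y : C} (f : X ⟶ Y), f ≫ ι Y = ι X ≫ dmap (dmap f)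
  ι_dagger : ∀ X : C, ι (dob X) ≫ dmap (ι X) = 𝟙 (dob X)

/-- A unitary structure on an involutive category: isomorphisms `φ_X : X → X†`
with `φ_{X†} = (φ_X⁻¹)†` and `φ_X ≫ φ_{X†} = ι_X`. -/
structure UnitaryStruct {C : Type u} [Category.{v} C] (D : Involutive C) where
  φ : ∀ X : C, X ⟶ D.dob X
  φinv : ∀ X : C, D.dob X ⟶ X
  φ_hom_inv : ∀ X : C, φ X ≫ φinv X = 𝟙 X
  φ_inv_hom : ∀ X : C, φinv X ≫ φ X = 𝟙 (D.dob X)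
  u1 : ∀ X : C, φ (D.dob X) = D.dmap (φinv X)
  u2 : ∀ X : C, φ X ≫ φ (D.dob X) = D.ι X

/-- An inner product combinator on an involutive category. -/
structure IPStruct {C : Type u} [Category.{v} C] (D : Involutive C) where
  ip : ∀ {A B X : C}, (A ⟶ X) → (B ⟶ X) → (A ⟶ D.dob B)

/-- The dual inner product `⟨h|k⟩^ι := ι_{A†} ≫ ⟨k†|h†⟩† ≫ ι_B⁻¹`. -/
def IPStruct.dual {C : Type u} [Category.{v} C] {D : Involutive C} (S : IPStruct D)
    {X A B : C} (h : X ⟶ A) (k : X ⟶ B) : D.dob A ⟶ B :=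
  D.ι (D.dob A) ≫ D.dmap (S.ip (D.dmap k) (D.dmap h)) ≫ D.ιinv B

/-- An inner product category: axioms [IP.1]–[IP.4]. -/
structure InnerProduct {C : Type u} [Category.{v} C] (D : Involutive C) extends IPStruct D where
  ip1 : ∀ {A B X Y Z : C} (f : A ⟶ X) (g : B ⟶ X) (h : Y ⟶ A) (k : Z ⟶ B),
    ip (h ≫ f) (k ≫ g) = h ≫ ip f g ≫ D.dmap k
  ip2a : ∀ {A B X : C} (f : A ⟶ X) (g : B ⟶ X),
    D.ι A ≫ toIPStruct.dual (D.dmap f) (D.dmap g) = ip f g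
  ip2b : ∀ {A B X : C} (f : A ⟶ X) (g : B ⟶ X),
    D.ι B ≫ D.dmap (ip f g) = ip g f
  ip3 : ∀ {A B X : C} (f : A ⟶ X) (g : B ⟶ X) (h k : X ⟶ B),
    h ≫ g = 𝟙 X → ip f g ≫ toIPStruct.dual h k = f ≫ k
  ip4 : ∀ {A X Z : C} (f : A ⟶ Z) (g : A ⟶ X) (h k : X ⟶ A),
    g ≫ h = 𝟙 A → toIPStruct.dual f g ≫ ip h k = D.dmap (k ≫ f)

/-- The inner product induced by a unitary structure: `⟨f|g⟩ := f ≫ φ_X ≫ g†`. -/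
def UnitaryStruct.uip {C : Type u} [Category.{v} C] {D : Involutive C} (U : UnitaryStruct D)
    {A B X : C} (f : A ⟶ X) (g : B ⟶ X) : A ⟶ D.dob B :=
  f ≫ U.φ X ≫ D.dmap g

/-- The dual inner product induced by a unitary structure. -/
def UnitaryStruct.udual {C : Type u} [Category.{v} C] {D : Involutive C} (U : UnitaryStruct D)
    {X A B : C} (h : X ⟶ A) (k : X ⟶ B) : D.dob A ⟶ B :=
  D.ι (D.dob A) ≫ D.dmap (U.uip (D.dmap k) (D.dmap h)) ≫ D.ιinv B

/-- The inner adjoint `f* := φ_B ≫ f† ≫ φ_A⁻¹` of `f : A ⟶ B`. -/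
def UnitaryStruct.adj {C : Type u} [Category.{v} C] {D : Involutive C} (U : UnitaryStruct D)
    {A B : C} (f : A ⟶ B) : B ⟶ A :=
  U.φ B ≫ D.dmap f ≫ U.φinv A

/-- Every inner product category is a unitary category, with unitary structure
`φ_A := ⟨1_A|1_A⟩ : A → A†`. In particular `φ_A` is an isomorphism with inverse
`⟨1_A|1_A⟩^ι`, and [U.1] `φ_{A†} = (φ_A⁻¹)†` and [U.2] `φ_A ≫ φ_{A†} = ι_A` hold. -/
theorem inner_product_is_unitary {C : Type u} [Category.{v} C]
    (D : Involutive C) (S : InnerProduct D) :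
    (∀ A : C, S.ip (𝟙 A) (𝟙 A) ≫ S.dual (𝟙 A) (𝟙 A) = 𝟙 A) ∧
    (∀ A : C, S.dual (𝟙 A) (𝟙 A) ≫ S.ip (𝟙 A) (𝟙 A) = 𝟙 (D.dob A)) ∧
    (∀ A : C, S.ip (𝟙 (D.dob A)) (𝟙 (D.dob A)) = D.dmap (S.dual (𝟙 A) (𝟙 A))) ∧
    (∀ A : C, S.ip (𝟙 A) (𝟙 A) ≫ S.ip (𝟙 (D.dob A)) (𝟙 (D.dob A)) = D.ι A) := by
  have dmap_ιinv : ∀ A : C, D.dmap (D.ιinv A) = D.ι (D.dob A) := by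
    intro A
    calc D.dmap (D.ιinv A)
        = (D.ι (D.dob A) ≫ D.dmap (D.ι A)) ≫ D.dmap (D.ιinv A) := by
          rw [D.ι_dagger A, Category.id_comp]
      _ = D.ι (D.dob A) ≫ D.dmap (D.ιinv A ≫ D.ι A) := by
          rw [D.dmap_comp, Category.assoc]
      _ = D.ι (D.dob A) := by rw [D.ι_inv_hom, D.dmap_id, Category.comp_id]
  have h1 : ∀ A : C, S.ip (𝟙 A) (𝟙 A) ≫ S.dual (𝟙 A) (𝟙 A) = 𝟙 A := by
    intro A
    have := S.ip3 (𝟙 A) (𝟙 A) (𝟙 A) (𝟙 A) (Category.id_comp _)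
    simpa using this
  have h2 : ∀ A : C, S.dual (𝟙 A) (𝟙 A) ≫ S.ip (𝟙 A) (𝟙 A) = 𝟙 (D.dob A) := by
    intro A
    have := S.ip4 (𝟙 A) (𝟙 A) (𝟙 A) (𝟙 A) (Category.id_comp _)
    simpa [D.dmap_id] using this
  refine ⟨h1, h2, ?_, ?_⟩
  · intro A
    set σ := S.ip (𝟙 (D.dob A)) (𝟙 (D.dob A)) with hσ
    have hdual : S.dual (𝟙 A) (𝟙 A) = D.ι (D.dob A) ≫ D.dmap σ ≫ D.ιinv A := by
      simp [IPStruct.dual, hσ, D.dmap_id]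
    rw [hdual, D.dmap_comp, D.dmap_comp, dmap_ιinv]
    have hnat : D.ι (D.dob A) ≫ D.dmap (D.dmap σ) = σ ≫ D.ι (D.dob (D.dob A)) :=
      (D.ι_natural σ).symm
    rw [hnat, Category.assoc, D.ι_dagger, Category.comp_id]
  · intro A
    have h2a := S.ip2a (𝟙 A) (𝟙 A)
    have : S.ip (𝟙 A) (𝟙 A) =
        D.ι A ≫ S.toIPStruct.dual (𝟙 (D.dob A)) (𝟙 (D.dob A)) := by
      rw [← h2a, D.dmap_id]
    rw [this, Category.assoc, h2 (D.dob A), Category.comp_id]
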